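/- For every integer m with m ≥ 2, the improper integral ∫_{−π}^{π} 3 cos(mθ) cos(θ) ln(1 − cos(θ)) dθ converges (the integrand is integrable on [−π, π]) and equals −6π m / (m² − 1). -/

import Mathlib

open Real MeasureTheory intervalIntegral

noncomputable section

open Set Filter Topology Interval

namespace SQGaux

lemma one_sub_cos_lower {θ : ℝ} (h : |θ| ≤ π) :
    2 / π ^ 2 * θ ^ 2 ≤ 1 - Real.cos θ := by
  have := Real.cos_le_one_sub_mul_cos_sq h
  linarith

lemma one_sub_cos_pos {θ : ℝ} (h : |θ| ≤ π) (h0 : θ ≠ 0) :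
    0 < 1 - Real.cos θ := by
  have h1 := one_sub_cos_lower h
  have : 0 < 2 / π ^ 2 * θ ^ 2 := by positivity
  linarith

lemma one_sub_cos_le_two (θ : ℝ) : 1 - Real.cos θ ≤ 2 := by
  have := Real.neg_one_le_cos θ; linarith

/-- bound for `|log (1 - cos θ)|` -/
lemma abs_log_bound {θ : ℝ} (h : |θ| ≤ π) (h0 : θ ≠ 0) :
    |Real.log (1 - Real.cos θ)| ≤ Real.log 2 + 2 * Real.log π - 2 * Real.log θ := by
  have hπ : 0 < π := Real.pi_pos
  have habs : 0 < |θ| := abs_pos.mpr h0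
  have hlogθ : Real.log θ = Real.log |θ| := (Real.log_abs θ).symm
  have ht : 0 < 1 - Real.cos θ := one_sub_cos_pos h h0
  have hlow : 2 / π ^ 2 * θ ^ 2 ≤ 1 - Real.cos θ := one_sub_cos_lower h
  have h2 : Real.log (1 - Real.cos θ) ≤ Real.log 2 :=
    Real.log_le_log (by positivity) (one_sub_cos_le_two θ)
  have h3 : Real.log (2 / π ^ 2 * θ ^ 2) ≤ Real.log (1 - Real.cos θ) :=
    Real.log_le_log (by positivity) hlow
  have h4 : Real.log (2 / π ^ 2 * θ ^ 2)
      = Real.log 2 - 2 * Real.log π + 2 * Real.log θ := by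
    rw [Real.log_mul (by positivity) (by positivity), Real.log_div (by norm_num) (by positivity),
      Real.log_pow, Real.log_pow]
    push_cast; ring
  have hθπ : Real.log θ ≤ Real.log π := by
    rw [hlogθ]; exact Real.log_le_log habs h
  have hlog2 : (0:ℝ) ≤ Real.log 2 := Real.log_nonneg (by norm_num)
  rw [abs_le]
  constructor <;> [linarith [h3, h4.symm ▸ h3]; linarith]

/-- `log` is interval integrable on `[0, b]` for `b ≥ 0`. -/
lemma log_ii_aux {b : ℝ} (hb : 0 ≤ b) (hb1 : b ≤ 1) :
    IntervalIntegrable Real.log volume 0 b := by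
    have hcont : ContinuousOn (fun x : ℝ => x - x * Real.log x) (Icc 0 b) :=
      (continuous_id.sub Real.continuous_mul_log).continuousOn
    have hderiv : ∀ x ∈ Ioo (0:ℝ) b, HasDerivAt (fun x : ℝ => x - x * Real.log x)
        (-Real.log x) x := by
      intro x hx
      have h1 : HasDerivAt (fun x : ℝ => x * Real.log x) (Real.log x + 1) x := by
        have := (hasDerivAt_id x).mul (Real.hasDerivAt_log hx.1.ne')
        exact this.congr_deriv (by simp [hx.1.ne'])
      have := (hasDerivAt_id x).sub h1
      exact this.congr_deriv (by ring)
    have hnn : ∀ x ∈ Ioo (0:ℝ) b, 0 ≤ -Real.log x := by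
      intro x hx
      have : Real.log x ≤ 0 := Real.log_nonpos hx.1.le (hx.2.le.trans hb1)
      linarith
    have := intervalIntegral.integrableOn_deriv_of_nonneg hcont hderiv hnn
    have hii : IntervalIntegrable (fun x => -Real.log x) volume 0 b :=
      (intervalIntegrable_iff_integrableOn_Ioc_of_le hb).mpr this
    have heq : Real.log = -fun x => -Real.log x := by funext x; simp
    rw [heq]; exact hii.neg

lemma log_intervalIntegrable_right {b : ℝ} (hb : 0 ≤ b) :
    IntervalIntegrable Real.log volume 0 b := by
  rcases le_or_gt b 1 with hb1 | hb1
  · exact log_ii_aux hb hb1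
  · have h1 : IntervalIntegrable Real.log volume 0 1 := log_ii_aux zero_le_one le_rfl
    have h2 : IntervalIntegrable Real.log volume 1 b := by
      apply intervalIntegrable_log
      rw [Set.mem_uIcc]
      push_neg
      refine ⟨fun h => ?_, fun h => ?_⟩ <;> [norm_num at h; linarith]
    exact h1.trans h2

lemma log_intervalIntegrable : IntervalIntegrable Real.log volume (-π) π := by
  have hπ : (0:ℝ) ≤ π := Real.pi_pos.le
  have h1 : IntervalIntegrable Real.log volume 0 π := log_intervalIntegrable_right hπ
  have h2 : IntervalIntegrable Real.log volume (-π) 0 := by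
    have := ((IntervalIntegrable.iff_comp_neg (f := Real.log) (a := π) (b := 0)).mp h1.symm : )
    simp only [neg_zero] at this
    have heq : (fun x : ℝ => Real.log (-x)) = Real.log := by
      funext x; exact Real.log_neg_eq_log x
    rwa [heq] at this
  exact h2.trans h1

lemma meas_logcos : Measurable (fun θ : ℝ => Real.log (1 - Real.cos θ)) :=
  Real.measurable_log.comp (measurable_const.sub Real.continuous_cos.measurable)

/-- Core integrability of the log singularity. -/
lemma core_intervalIntegrable :
    IntervalIntegrable (fun θ : ℝ => Real.log (1 - Real.cos θ)) volume (-π) π := by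
  have hπ : 0 < π := Real.pi_pos
  have hg : IntervalIntegrable (fun θ : ℝ => Real.log 2 + 2 * Real.log π - 2 * Real.log θ)
      volume (-π) π := by
    exact (_root_.intervalIntegrable_const (c := Real.log 2 + 2 * Real.log π)).sub
      (log_intervalIntegrable.const_mul 2)
  refine hg.mono_fun (meas_logcos.aestronglyMeasurable) ?_
  have hae : ∀ᵐ θ ∂(volume.restrict (Ι (-π) π)), θ ≠ 0 := by
    refine ae_restrict_of_ae ?_
    have : (volume : Measure ℝ) {(0:ℝ)} = 0 := measure_singleton 0
    filter_upwards [measure_eq_zero_iff_ae_notMem.mp this] with x hx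
    simpa using hx
  have hmem : ∀ᵐ θ ∂(volume.restrict (Ι (-π) π)), θ ∈ Ι (-π) π :=
    ae_restrict_mem measurableSet_uIoc
  filter_upwards [hae, hmem] with θ h0 hmemθ
  have hmem' : θ ∈ Set.Ioc (-π) π := by
    rwa [Set.uIoc_of_le (by linarith : -π ≤ π)] at hmemθ
  have habs : |θ| ≤ π := abs_le.mpr ⟨hmem'.1.le, hmem'.2⟩
  have hb := abs_log_bound habs h0
  have hθπ : Real.log θ ≤ Real.log π := by
    rw [← Real.log_abs]
    exact Real.log_le_log (abs_pos.mpr h0) habs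
  have hlog2 : (0:ℝ) ≤ Real.log 2 := Real.log_nonneg (by norm_num)
  simp only [Real.norm_eq_abs]
  calc |Real.log (1 - Real.cos θ)| ≤ Real.log 2 + 2 * Real.log π - 2 * Real.log θ := hb
    _ ≤ |Real.log 2 + 2 * Real.log π - 2 * Real.log θ| := le_abs_self _

/-- products with continuous functions, restricted to subintervals -/
lemma prod_intervalIntegrable (g : ℝ → ℝ) (hg : Continuous g) {a b : ℝ}
    (ha : a ∈ Set.Icc (-π) π) (hb : b ∈ Set.Icc (-π) π) :
    IntervalIntegrable (fun θ : ℝ => g θ * Real.log (1 - Real.cos θ)) volume a b := by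
  have hmono : Set.uIcc a b ⊆ Set.uIcc (-π) π := by
    rw [Set.uIcc_of_le (by linarith [Real.pi_pos] : -π ≤ π)]
    exact Set.uIcc_subset_Icc ha hb
  exact (core_intervalIntegrable.mono_set hmono).continuousOn_mul hg.continuousOn

/-- the auxiliary kernel -/
def q (n : ℕ) (θ : ℝ) : ℝ := Real.sin (n * θ) * Real.sin θ / (1 - Real.cos θ)

lemma q_bound {n : ℕ} {θ : ℝ} (h : θ ∈ Set.Ioc (0:ℝ) π) :
    |q n θ| ≤ n * π ^ 2 / 2 := by
  have hπ : 0 < π := Real.pi_pos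
  have habs : |θ| ≤ π := abs_le.mpr ⟨by linarith [h.1], h.2⟩
  have ht : 0 < 1 - Real.cos θ := one_sub_cos_pos habs h.1.ne'
  have hlow : 2 / π ^ 2 * θ ^ 2 ≤ 1 - Real.cos θ := one_sub_cos_lower habs
  have h1 : |Real.sin (n * θ)| ≤ n * θ := by
    calc |Real.sin (n * θ)| ≤ |(n:ℝ) * θ| := Real.abs_sin_le_abs
    _ = n * θ := abs_of_nonneg (mul_nonneg (Nat.cast_nonneg n) h.1.le)
  have h2 : |Real.sin θ| ≤ θ := by
    calc |Real.sin θ| ≤ |θ| := Real.abs_sin_le_abs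
    _ = θ := abs_of_nonneg h.1.le
  have key : |Real.sin (n * θ) * Real.sin θ| ≤ (n * π ^ 2 / 2) * (1 - Real.cos θ) := by
    rw [abs_mul]
    calc |Real.sin (n * θ)| * |Real.sin θ| ≤ (n * θ) * θ :=
          mul_le_mul h1 h2 (abs_nonneg _) (mul_nonneg (Nat.cast_nonneg n) h.1.le)
      _ = (n * π ^ 2 / 2) * (2 / π ^ 2 * θ ^ 2) := by field_simp
      _ ≤ (n * π ^ 2 / 2) * (1 - Real.cos θ) := by
          apply mul_le_mul_of_nonneg_left hlow (by positivity)
  rw [q, abs_div, abs_of_pos ht, div_le_iff₀ ht]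
  exact key

lemma q_measurable (n : ℕ) : Measurable (q n) := by
  unfold q
  exact ((Real.continuous_sin.comp (continuous_const.mul continuous_id)).mul
    Real.continuous_sin).measurable.div
    (measurable_const.sub Real.continuous_cos.measurable)

lemma q_intervalIntegrable (n : ℕ) : IntervalIntegrable (q n) volume 0 π := by
  refine (_root_.intervalIntegrable_const (c := (n:ℝ) * π ^ 2 / 2)).mono_fun
    ((q_measurable n).aestronglyMeasurable) ?_
  have hmem : ∀ᵐ θ ∂(volume.restrict (Ι (0:ℝ) π)), θ ∈ Ι (0:ℝ) π :=
    ae_restrict_mem measurableSet_uIoc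
  filter_upwards [hmem] with θ hθ
  rw [Set.uIoc_of_le Real.pi_pos.le] at hθ
  simp only [Real.norm_eq_abs]
  exact (q_bound hθ).trans (le_abs_self _)

/-- the recursion -/
lemma q_succ {n : ℕ} {θ : ℝ} (ht : 1 - Real.cos θ ≠ 0) :
    q (n + 1) θ = q n θ + Real.cos ((n + 1) * θ) + Real.cos (n * θ) := by
  have hpy := Real.sin_sq_add_cos_sq θ
  have hexp : ((n:ℝ) + 1) * θ = n * θ + θ := by ring
  push_cast
  rw [q, q]
  push_cast
  rw [hexp, Real.sin_add, Real.cos_add]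
  field_simp
  linear_combination Real.cos ((n:ℝ) * θ) * hpy

lemma integral_cos_nat (k : ℕ) :
    (∫ θ in (0:ℝ)..π, Real.cos (k * θ)) = if k = 0 then π else 0 := by
  rcases Nat.eq_zero_or_pos k with rfl | hk
  · simp
  · have hk' : (k:ℝ) ≠ 0 := Nat.cast_ne_zero.mpr hk.ne'
    have : (∫ θ in (0:ℝ)..π, Real.cos (k * θ))
        = Real.sin (k * π) / k - Real.sin (k * 0) / k := by
      apply intervalIntegral.integral_eq_sub_of_hasDerivAt (f := fun x => Real.sin ((k:ℝ)*x)/(k:ℝ))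
      · intro x _
        have h1 : HasDerivAt (fun θ : ℝ => (k:ℝ) * θ) k x := by
          simpa using (hasDerivAt_id x).const_mul (k:ℝ)
        have := (Real.hasDerivAt_sin ((k:ℝ) * x)).comp x h1
        have h2 := this.div_const (k:ℝ)
        simpa [mul_comm, mul_div_assoc, mul_div_cancel_left₀ _ hk'] using h2
      · exact (Real.continuous_cos.comp (continuous_const.mul continuous_id)).intervalIntegrable 0 π
    rw [this, Real.sin_nat_mul_pi]
    simp [hk.ne']

lemma integral_q (n : ℕ) :
    (∫ θ in (0:ℝ)..π, q n θ) = if n = 0 then 0 else π := by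
  induction n with
  | zero => simp [q]
  | succ n ih =>
    have hcong : (∫ θ in (0:ℝ)..π, q (n+1) θ)
        = ∫ θ in (0:ℝ)..π, (q n θ + Real.cos ((n+1) * θ) + Real.cos (n * θ)) := by
      apply intervalIntegral.integral_congr_ae
      have hmem : ∀ᵐ θ ∂(volume : Measure ℝ), θ ∈ Ι (0:ℝ) π → θ ∈ Set.Ioc (0:ℝ) π := by
        filter_upwards with θ hθ
        rwa [Set.uIoc_of_le Real.pi_pos.le] at hθ
      filter_upwards [hmem] with θ hθ hθ'
      have h := hθ hθ'
      have habs : |θ| ≤ π := abs_le.mpr ⟨by linarith [h.1, Real.pi_pos], h.2⟩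
      have := (one_sub_cos_pos habs h.1.ne').ne'
      push_cast
      exact q_succ this
    have hint1 : IntervalIntegrable (fun θ => Real.cos ((n+1) * θ)) volume 0 π :=
      (Real.continuous_cos.comp (continuous_const.mul continuous_id)).intervalIntegrable 0 π
    have hint2 : IntervalIntegrable (fun θ => Real.cos ((n:ℝ) * θ)) volume 0 π :=
      (Real.continuous_cos.comp (continuous_const.mul continuous_id)).intervalIntegrable 0 π
    rw [hcong, intervalIntegral.integral_add ((q_intervalIntegrable n).add hint1) hint2,
      intervalIntegral.integral_add (q_intervalIntegrable n) hint1, ih]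
    have e1 := integral_cos_nat (n+1)
    have e2 := integral_cos_nat n
    push_cast at e1 e2 ⊢
    rw [e1, e2]
    rcases Nat.eq_zero_or_pos n with rfl | hn
    · norm_num
    · simp [hn.ne', Nat.succ_ne_zero]

/-- The half-interval log-integral. -/
lemma half_integral (n : ℕ) (hn : 1 ≤ n) :
    (∫ θ in (0:ℝ)..π, Real.cos (n * θ) * Real.log (1 - Real.cos θ)) = -π / n := by
  have hπ : 0 < π := Real.pi_pos
  have hn' : ((n:ℝ)) ≠ 0 := Nat.cast_ne_zero.mpr (by omega)
  set F : ℝ → ℝ := fun θ => Real.sin (n * θ) / n * Real.log (1 - Real.cos θ) with hF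
  set f' : ℝ → ℝ := fun θ => Real.cos (n * θ) * Real.log (1 - Real.cos θ) + q n θ / n with hf'
  have hint1 : IntervalIntegrable
      (fun θ : ℝ => Real.cos ((n:ℝ) * θ) * Real.log (1 - Real.cos θ)) volume 0 π :=
    prod_intervalIntegrable _ (Real.continuous_cos.comp (continuous_const.mul continuous_id))
      ⟨by linarith, hπ.le⟩ ⟨by linarith, le_rfl⟩
  have hint : IntervalIntegrable f' volume 0 π :=
    hint1.add ((q_intervalIntegrable n).div_const _)
  have hderiv : ∀ θ ∈ Set.Ioo (0:ℝ) π, HasDerivAt F (f' θ) θ := by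
    intro θ hθ
    have habs : |θ| ≤ π := abs_le.mpr ⟨by linarith [hθ.1], hθ.2.le⟩
    have ht : 0 < 1 - Real.cos θ := one_sub_cos_pos habs hθ.1.ne'
    have h1 : HasDerivAt (fun θ : ℝ => Real.sin ((n:ℝ) * θ) / n)
        (Real.cos ((n:ℝ) * θ)) θ := by
      have hlin : HasDerivAt (fun θ : ℝ => (n:ℝ) * θ) n θ := by
        simpa using (hasDerivAt_id θ).const_mul (n:ℝ)
      have := ((Real.hasDerivAt_sin ((n:ℝ) * θ)).comp θ hlin).div_const (n:ℝ)
      simpa [mul_comm, mul_div_assoc, mul_div_cancel_left₀ _ hn'] using this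
    have h2 : HasDerivAt (fun θ : ℝ => Real.log (1 - Real.cos θ))
        (Real.sin θ / (1 - Real.cos θ)) θ := by
      have hc : HasDerivAt (fun θ : ℝ => 1 - Real.cos θ) (Real.sin θ) θ := by
        exact ((hasDerivAt_const θ (1:ℝ)).sub (Real.hasDerivAt_cos θ)).congr_deriv (by ring)
      have := (Real.hasDerivAt_log ht.ne').comp θ hc
      rw [div_eq_inv_mul]; exact this
    have := h1.mul h2
    refine this.congr_deriv ?_
    simp only [hf', q]
    field_simp
  have hlim0 : Tendsto F (𝓝[>] (0:ℝ)) (𝓝 0) := by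
    apply squeeze_zero_norm' (a := fun θ : ℝ =>
      θ * (Real.log 2 + 2 * Real.log π) - 2 * (θ * Real.log θ)) ?h1 ?h2
    case h1 =>
      filter_upwards [Ioc_mem_nhdsGT_of_mem (Set.left_mem_Ico.mpr hπ)] with θ hθ
      have habs : |θ| ≤ π := abs_le.mpr ⟨by linarith [hθ.1], hθ.2⟩
      have hb := abs_log_bound habs hθ.1.ne'
      have hsin : |Real.sin ((n:ℝ) * θ) / n| ≤ θ := by
        rw [abs_div, abs_of_pos (Nat.cast_pos.mpr (by omega : 0 < n) : (0:ℝ) < (n:ℝ))]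
        rw [div_le_iff₀ (Nat.cast_pos.mpr (by omega : 0 < n))]
        calc |Real.sin ((n:ℝ) * θ)| ≤ |(n:ℝ) * θ| := Real.abs_sin_le_abs
          _ = θ * n := by rw [abs_of_nonneg (mul_nonneg (Nat.cast_nonneg n) hθ.1.le)]; ring
      have hbn : 0 ≤ Real.log 2 + 2 * Real.log π - 2 * Real.log θ :=
        (abs_nonneg _).trans hb
      calc ‖F θ‖ = |Real.sin ((n:ℝ) * θ) / n| * |Real.log (1 - Real.cos θ)| := by
            rw [hF]; exact abs_mul _ _
        _ ≤ θ * (Real.log 2 + 2 * Real.log π - 2 * Real.log θ) := by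
            apply mul_le_mul hsin hb (abs_nonneg _) (by linarith [hθ.1])
        _ = θ * (Real.log 2 + 2 * Real.log π) - 2 * (θ * Real.log θ) := by ring
    case h2 =>
      have h1 : Tendsto (fun θ : ℝ => θ * Real.log θ) (𝓝[>] (0:ℝ)) (𝓝 0) := by
          have := Real.continuous_mul_log.tendsto 0
          simp only [zero_mul] at this
          exact this.mono_left nhdsWithin_le_nhds
      have h2 : Tendsto (fun θ : ℝ => θ) (𝓝[>] (0:ℝ)) (𝓝 0) :=
        tendsto_id.mono_left nhdsWithin_le_nhds
      have := ((h2.mul_const (Real.log 2 + 2 * Real.log π)).sub (h1.const_mul 2))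
      simpa using this
  have hlimπ : Tendsto F (𝓝[<] π) (𝓝 0) := by
    have hc : ContinuousAt F π := by
      have hA : ContinuousAt (fun θ : ℝ => Real.sin ((n:ℝ) * θ) / n) π :=
        ((Real.continuous_sin.comp (continuous_const.mul continuous_id)).div_const
          _).continuousAt
      have hB : ContinuousAt (fun θ : ℝ => Real.log (1 - Real.cos θ)) π := by
        apply ContinuousAt.comp (Real.continuousAt_log ?_)
          (continuous_const.sub Real.continuous_cos).continuousAt
        simp [Real.cos_pi]
      exact hA.mul hB
    have hFπ : F π = 0 := by
      rw [hF]
      simp [Real.sin_nat_mul_pi]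
    have := hc.tendsto.mono_left (nhdsWithin_le_nhds (s := Set.Iio π))
    rwa [hFπ] at this
  have key : (∫ θ in (0:ℝ)..π, f' θ) = 0 - 0 :=
    intervalIntegral.integral_eq_sub_of_hasDerivAt_of_tendsto hπ hderiv hint hlim0 hlimπ
  rw [hf'] at key
  rw [intervalIntegral.integral_add hint1 ((q_intervalIntegrable n).div_const _)] at key
  have hq : (∫ θ in (0:ℝ)..π, q n θ / n) = π / n := by
    rw [intervalIntegral.integral_div, integral_q, if_neg (by omega : ¬ n = 0)]
  have : (∫ θ in (0:ℝ)..π, Real.cos ((n:ℝ) * θ) * Real.log (1 - Real.cos θ)) = -(π / n) := by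
    linarith [key, hq]
  rw [this]; ring

end SQGaux

open SQGaux

/-- The key Fourier-multiplier integral for the radially homogeneous SQG equation:
for every integer `m ≥ 2`, the function `θ ↦ 3 cos(mθ) cos(θ) ln(1 − cos θ)` is
integrable on `[−π, π]` and
`∫_{−π}^{π} 3 cos(mθ) cos(θ) ln(1 − cos θ) dθ = −6πm/(m² − 1)`. -/
theorem sqg_log_integral (m : ℕ) (hm : 2 ≤ m) :
    IntervalIntegrable
      (fun θ : ℝ => 3 * Real.cos (m * θ) * Real.cos θ * Real.log (1 - Real.cos θ))
      volume (-Real.pi) Real.pi ∧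
    (∫ θ in (-Real.pi)..Real.pi,
        3 * Real.cos (m * θ) * Real.cos θ * Real.log (1 - Real.cos θ)) =
      -(6 * Real.pi * m) / (m ^ 2 - 1) := by
  have hπ : 0 < π := Real.pi_pos
  have hgc : Continuous (fun θ : ℝ => 3 * Real.cos (m * θ) * Real.cos θ) := by
    exact ((continuous_const.mul
      (Real.continuous_cos.comp (continuous_const.mul continuous_id))).mul Real.continuous_cos)
  have hmain : IntervalIntegrable
      (fun θ : ℝ => 3 * Real.cos (m * θ) * Real.cos θ * Real.log (1 - Real.cos θ))
      volume (-π) π :=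
    prod_intervalIntegrable _ hgc ⟨le_rfl, by linarith⟩ ⟨by linarith, le_rfl⟩
  refine ⟨hmain, ?_⟩
  set f : ℝ → ℝ := fun θ => 3 * Real.cos (m * θ) * Real.cos θ * Real.log (1 - Real.cos θ)
    with hf
  have hsub : ∀ a b, a ∈ Set.Icc (-π) π → b ∈ Set.Icc (-π) π →
      IntervalIntegrable f volume a b := fun a b ha hb =>
    prod_intervalIntegrable _ hgc ha hb
  -- split at 0
  have hsplit : (∫ θ in (-π)..π, f θ) = (∫ θ in (-π)..(0:ℝ), f θ) + ∫ θ in (0:ℝ)..π, f θ :=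
    (intervalIntegral.integral_add_adjacent_intervals
      (hsub _ _ ⟨le_rfl, by linarith⟩ ⟨by linarith, by linarith⟩)
      (hsub _ _ ⟨by linarith, by linarith⟩ ⟨by linarith, le_rfl⟩)).symm
  -- evenness
  have heven : (∫ θ in (-π)..(0:ℝ), f θ) = ∫ θ in (0:ℝ)..π, f θ := by
    have h1 : (∫ θ in (0:ℝ)..π, f (-θ)) = ∫ θ in (-π)..(0:ℝ), f θ := by
      simpa using intervalIntegral.integral_comp_neg (a := (0:ℝ)) (b := π) f
    rw [← h1]
    apply intervalIntegral.integral_congr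
    intro θ _
    simp [hf, mul_neg, Real.cos_neg]
  -- expand the half integral
  have hL : ∀ θ : ℝ, f θ
      = 3/2 * (Real.cos (((m+1 : ℕ) : ℝ) * θ) * Real.log (1 - Real.cos θ))
      + 3/2 * (Real.cos (((m-1 : ℕ) : ℝ) * θ) * Real.log (1 - Real.cos θ)) := by
    intro θ
    have h1 : ((m+1 : ℕ) : ℝ) * θ = m * θ + θ := by push_cast; ring
    have h2 : ((m-1 : ℕ) : ℝ) * θ = m * θ - θ := by
      push_cast [Nat.cast_sub (by omega : 1 ≤ m)]; ring
    rw [h1, h2, Real.cos_add, Real.cos_sub, hf]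
    ring
  have hhalf : (∫ θ in (0:ℝ)..π, f θ)
      = 3/2 * (-π / ((m+1 : ℕ) : ℝ)) + 3/2 * (-π / ((m-1 : ℕ) : ℝ)) := by
    have hi1 : IntervalIntegrable
        (fun θ : ℝ => 3/2 * (Real.cos (((m+1 : ℕ) : ℝ) * θ) * Real.log (1 - Real.cos θ)))
        volume 0 π :=
      (prod_intervalIntegrable _ (Real.continuous_cos.comp (continuous_const.mul continuous_id))
        ⟨by linarith, by linarith⟩ ⟨by linarith, le_rfl⟩).const_mul _
    have hi2 : IntervalIntegrable
        (fun θ : ℝ => 3/2 * (Real.cos (((m-1 : ℕ) : ℝ) * θ) * Real.log (1 - Real.cos θ)))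
        volume 0 π :=
      (prod_intervalIntegrable _ (Real.continuous_cos.comp (continuous_const.mul continuous_id))
        ⟨by linarith, by linarith⟩ ⟨by linarith, le_rfl⟩).const_mul _
    rw [intervalIntegral.integral_congr (g :=
        fun θ : ℝ => 3/2 * (Real.cos (((m+1 : ℕ) : ℝ) * θ) * Real.log (1 - Real.cos θ))
        + 3/2 * (Real.cos (((m-1 : ℕ) : ℝ) * θ) * Real.log (1 - Real.cos θ)))
        (fun θ _ => hL θ),
      intervalIntegral.integral_add hi1 hi2,
      intervalIntegral.integral_const_mul, intervalIntegral.integral_const_mul,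
      half_integral (m+1) (by omega), half_integral (m-1) (by omega)]
  -- final arithmetic
  rw [hsplit, heven, hhalf]
  have hm1 : ((m-1 : ℕ) : ℝ) = (m : ℝ) - 1 := by
    push_cast [Nat.cast_sub (by omega : 1 ≤ m)]; ring
  have hm2 : (2 : ℝ) ≤ (m : ℝ) := by exact_mod_cast hm
  rw [hm1]
  push_cast
  have h1 : (m : ℝ) + 1 ≠ 0 := by linarith
  have h2 : (m : ℝ) - 1 ≠ 0 := by intro h; nlinarith [h]
  have h3 : (m : ℝ) ^ 2 - 1 ≠ 0 := by intro h; nlinarith [h]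
  field_simp
  ring
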